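/- Let x₁,…,x₄ ∈ ℂ² be pairwise non-parallel and y₁,…,y₄ ∈ ℂ² be pairwise non-parallel. Then the 4×4 matrix Z₄ with rows xᵢᵀ ⊗ yᵢᵀ is singular if and only if there exists an invertible 2×2 matrix H such that Hxᵢ is a scalar multiple of yᵢ for each i = 1,…,4. -/
import Mathlib

open Matrix

/-- If `b ≠ 0` and the cross product of `a` and `b` vanishes, `a` is a multiple of `b`. -/
private lemma para (a b : Fin 2 → ℂ) (hb : b ≠ 0) (h : a 0 * b 1 - a 1 * b 0 = 0) :
    ∃ c : ℂ, a = c • b := by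
  by_cases hb0 : b 0 = 0
  · have hb1 : b 1 ≠ 0 := by
      intro hb1; apply hb; funext i; fin_cases i <;> simp [hb0, hb1]
    have ha0 : a 0 = 0 := by
      have : a 0 * b 1 = 0 := by rw [hb0] at h; linear_combination h
      exact (mul_eq_zero.mp this).resolve_right hb1
    refine ⟨a 1 / b 1, ?_⟩
    funext i; fin_cases i <;> simp [hb0, ha0] <;> field_simp
  · refine ⟨a 0 / b 0, ?_⟩
    funext i; fin_cases i
    · simp; field_simp
    · simp; field_simp; linear_combination -h

/-- Two vectors orthogonal to a nonzero `u` in `ℂ²` are parallel. -/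
private lemma ortho (u a b : Fin 2 → ℂ) (hu : u ≠ 0) (ha0 : a ≠ 0)
    (ha : a 0 * u 0 + a 1 * u 1 = 0) (hb : b 0 * u 0 + b 1 * u 1 = 0) :
    ∃ c : ℂ, b = c • a := by
  set p : Fin 2 → ℂ := ![u 1, -u 0] with hp
  have hpne : p ≠ 0 := by
    intro h0
    apply hu; funext i
    have h1 := congrFun h0 0
    have h2 := congrFun h0 1
    simp [hp] at h1 h2
    fin_cases i <;> simpa [h1]
  obtain ⟨c, hc⟩ := para a p hpne (by simp [hp]; linear_combination -ha)
  obtain ⟨d, hd⟩ := para b p hpne (by simp [hp]; linear_combination -hb)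
  have hcne : c ≠ 0 := by
    rintro rfl; simp at hc; exact ha0 hc
  refine ⟨d / c, ?_⟩
  rw [hc, hd, smul_smul]
  congr 1
  field_simp
  done

private lemma pigeon {P Q : Fin 4 → Prop} (h : ∀ i, P i ∨ Q i)
    (hP : ∀ i j, i ≠ j → P i → P j → False)
    (hQ : ∀ i j, i ≠ j → Q i → Q j → False) : False := by
  rcases h 0 with p0 | q0 <;> rcases h 1 with p1 | q1 <;> rcases h 2 with p2 | q2
  · exact hP 0 1 (by decide) p0 p1
  · exact hP 0 1 (by decide) p0 p1
  · exact hP 0 2 (by decide) p0 p2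
  · exact hQ 1 2 (by decide) q1 q2
  · exact hP 1 2 (by decide) p1 p2
  · exact hQ 0 2 (by decide) q0 q2
  · exact hQ 0 1 (by decide) q0 q1
  · exact hQ 0 1 (by decide) q0 q1

/-- For `x₁,…,x₄ ∈ ℂ²` pairwise non-parallel and `y₁,…,y₄ ∈ ℂ²` pairwise non-parallel,
the 4×4 matrix `Z₄` with rows `xᵢᵀ ⊗ yᵢᵀ` is singular iff there exists an invertible
2×2 matrix `H` with `Hxᵢ` a scalar multiple of `yᵢ` for each `i`. -/
theorem stmt4 (x y : Fin 4 → Fin 2 → ℂ)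
    (hx : ∀ i j, i ≠ j → ¬ ∃ c : ℂ, x j = c • x i)
    (hy : ∀ i j, i ≠ j → ¬ ∃ c : ℂ, y j = c • y i) :
    (Matrix.of fun i : Fin 4 =>
        ![x i 0 * y i 0, x i 0 * y i 1, x i 1 * y i 0, x i 1 * y i 1]).det = 0 ↔
      ∃ H : Matrix (Fin 2) (Fin 2) ℂ, IsUnit H.det ∧
        ∀ i, ∃ c : ℂ, H *ᵥ x i = c • y i := by
  have hxne : ∀ i, x i ≠ 0 := by
    intro i h0
    obtain ⟨j, hj⟩ : ∃ j, j ≠ i := ⟨if i = 0 then 1 else 0, by split <;> simp_all [eq_comm]⟩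
    exact hx j i hj ⟨0, by simp [h0]⟩
  have hyne : ∀ i, y i ≠ 0 := by
    intro i h0
    obtain ⟨j, hj⟩ : ∃ j, j ≠ i := ⟨if i = 0 then 1 else 0, by split <;> simp_all [eq_comm]⟩
    exact hy j i hj ⟨0, by simp [h0]⟩
  constructor
  · intro hdet
    obtain ⟨v, hv, hZv⟩ := (Matrix.exists_mulVec_eq_zero_iff).mpr hdet
    have e : ∀ i, x i 0 * y i 0 * v 0 + x i 0 * y i 1 * v 1
        + x i 1 * y i 0 * v 2 + x i 1 * y i 1 * v 3 = 0 := by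
      intro i
      have := congrFun hZv i
      simpa [Matrix.mulVec, dotProduct, Fin.sum_univ_four] using this
    -- M := !![v 0, v 1; v 2, v 3] is nonzero and annihilates; show det M ≠ 0
    have hMdet : v 0 * v 3 - v 1 * v 2 ≠ 0 := by
      intro hM0
      -- rank-one factorization v (j,k) = u j * w k
      obtain ⟨u, w, hune, hwne, hfac⟩ :
          ∃ u w : Fin 2 → ℂ, u ≠ 0 ∧ w ≠ 0 ∧
            v 0 = u 0 * w 0 ∧ v 1 = u 0 * w 1 ∧ v 2 = u 1 * w 0 ∧ v 3 = u 1 * w 1 := by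
        by_cases hr0 : (![v 0, v 1] : Fin 2 → ℂ) = 0
        · have h0 : v 0 = 0 := congrFun hr0 0
          have h1 : v 1 = 0 := congrFun hr0 1
          refine ⟨![0, 1], ![v 2, v 3], by simp [funext_iff, Fin.forall_fin_two],
            ?_, by simp [h0], by simp [h1], by simp, by simp⟩
          intro hr1
          apply hv; funext i
          have h2 := congrFun hr1 0
          have h3 := congrFun hr1 1
          simp at h2 h3
          fin_cases i <;> simp [h0, h1, h2, h3]
        · obtain ⟨t, ht⟩ := para ![v 2, v 3] ![v 0, v 1] hr0
            (by simp; linear_combination -hM0)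
          have h2 := congrFun ht 0
          have h3 := congrFun ht 1
          simp at h2 h3
          exact ⟨![1, t], ![v 0, v 1], by simp [funext_iff, Fin.forall_fin_two],
            hr0, by simp, by simp, by simp [h2, mul_comm], by simp [h3, mul_comm]⟩
      obtain ⟨f0, f1, f2, f3⟩ := hfac
      apply pigeon (P := fun i => x i 0 * u 0 + x i 1 * u 1 = 0)
        (Q := fun i => w 0 * y i 0 + w 1 * y i 1 = 0)
      · intro i
        have hei := e i
        rw [f0, f1, f2, f3] at hei
        have : (x i 0 * u 0 + x i 1 * u 1) * (w 0 * y i 0 + w 1 * y i 1) = 0 := by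
          linear_combination hei
        exact mul_eq_zero.mp this
      · intro i j hij hi hj
        exact hx i j hij (ortho u (x i) (x j) hune (hxne i) hi hj)
      · intro i j hij hi hj
        refine hy i j hij (ortho ![w 0, w 1] (y i) (y j) ?_ (hyne i) ?_ ?_)
        · intro h0
          apply hwne; funext k
          have h2 := congrFun h0 0
          have h3 := congrFun h0 1
          simp at h2 h3
          fin_cases k <;> simp [h2, h3]
        · simp; linear_combination hi
        · simp; linear_combination hj
    refine ⟨!![v 1, v 3; -v 0, -v 2], ?_, ?_⟩
    · rw [Matrix.det_fin_two_of]
      simp only [isUnit_iff_ne_zero]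
      intro h0
      exact hMdet (by linear_combination h0)
    · intro i
      have hcross : (!![v 1, v 3; -v 0, -v 2] *ᵥ x i) 0 * y i 1
          - (!![v 1, v 3; -v 0, -v 2] *ᵥ x i) 1 * y i 0 = 0 := by
        simp [Matrix.mulVec, dotProduct, Fin.sum_univ_two]
        linear_combination e i
      exact para _ (y i) (hyne i) hcross
  · rintro ⟨H, hH, hc⟩
    apply (Matrix.exists_mulVec_eq_zero_iff).mp
    refine ⟨![-H 1 0, H 0 0, -H 1 1, H 0 1], ?_, ?_⟩
    · intro h0
      have h00 := congrFun h0 1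
      have h01 := congrFun h0 3
      have h10 := congrFun h0 0
      have h11 := congrFun h0 2
      simp at h00 h01 h10 h11
      rw [isUnit_iff_ne_zero, Matrix.det_fin_two] at hH
      exact hH (by rw [h00, h01]; ring)
    · funext i
      obtain ⟨c, hci⟩ := hc i
      have e0 := congrFun hci 0
      have e1 := congrFun hci 1
      simp [Matrix.mulVec, dotProduct, Fin.sum_univ_two] at e0 e1
      simp [Matrix.mulVec, dotProduct, Fin.sum_univ_four]
      linear_combination y i 1 * e0 - y i 0 * e1
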